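/- The covered set after storing the first n files is C^{(n)} = { x ∈ ℝ : Y^{(n)}_x − I^{(n)}_x > 0 }. -/

import Mathlib

open MeasureTheory
open scoped Classical

/-- The covering `C^(n)` obtained after storing the first `n` files
`(x_0, l_0), …, (x_{n-1}, l_{n-1})`: `C^(0) = ∅` and
`C^(k+1) = C^(k) ∪ [x_k, y_k)` where `y_k` is the infimum of the `y ≥ x_k`
such that the free space `(C^(k))ᶜ ∩ [x_k, y)` has Lebesgue measure `l_k`. -/
noncomputable def cover (x l : ℕ → ℝ) : ℕ → Set ℝ
  | 0 => ∅
  | k + 1 =>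
      cover x l k ∪
        Set.Ico (x k)
          (sInf {y : ℝ | x k ≤ y ∧
            volume ((cover x l k)ᶜ ∩ Set.Ico (x k) y) = ENNReal.ofReal (l k)})

/-- The process `Y^(n)` : `Y^(n)_0 = 0` and
`Y^(n)_b - Y^(n)_a = Σ_{i < n, x_i ∈ (a,b]} l_i - (b-a)` for `a < b`. -/
noncomputable def Yn (x l : ℕ → ℝ) (n : ℕ) (b : ℝ) : ℝ :=
  (∑ i ∈ Finset.range n, if 0 < x i ∧ x i ≤ b then l i else 0)
    - (∑ i ∈ Finset.range n, if b < x i ∧ x i ≤ 0 then l i else 0) - b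

/-- The running infimum `I^(n)`. -/
noncomputable def In (x l : ℕ → ℝ) (n : ℕ) (z : ℝ) : ℝ := sInf (Yn x l n '' Set.Iic z)

section basic
variable (x l : ℕ → ℝ) (n : ℕ)

lemma Yn_lb (hl : ∀ i, 0 < l i) (b : ℝ) :
    -(∑ i ∈ Finset.range n, l i) - b ≤ Yn x l n b := by
  have h1 : (0:ℝ) ≤ ∑ i ∈ Finset.range n, if 0 < x i ∧ x i ≤ b then l i else 0 :=
    Finset.sum_nonneg fun i _ => by split_ifs <;> [exact (hl i).le; rfl]
  have h2 : (∑ i ∈ Finset.range n, if b < x i ∧ x i ≤ 0 then l i else 0)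
      ≤ ∑ i ∈ Finset.range n, l i :=
    Finset.sum_le_sum fun i _ => by split_ifs <;> [rfl; exact (hl i).le]
  unfold Yn; linarith

lemma Yn_ub (hl : ∀ i, 0 < l i) (b : ℝ) :
    Yn x l n b ≤ (∑ i ∈ Finset.range n, l i) - b := by
  have h1 : (∑ i ∈ Finset.range n, if 0 < x i ∧ x i ≤ b then l i else 0)
      ≤ ∑ i ∈ Finset.range n, l i :=
    Finset.sum_le_sum fun i _ => by split_ifs <;> [rfl; exact (hl i).le]
  have h2 : (0:ℝ) ≤ ∑ i ∈ Finset.range n, if b < x i ∧ x i ≤ 0 then l i else 0 :=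
    Finset.sum_nonneg fun i _ => by split_ifs <;> [exact (hl i).le; rfl]
  unfold Yn; linarith

lemma Sn_mono (hl : ∀ i, 0 < l i) : Monotone (fun b => Yn x l n b + b) := by
  intro a b hab
  unfold Yn
  simp only [sub_add_cancel]
  have h1 : (∑ i ∈ Finset.range n, if 0 < x i ∧ x i ≤ a then l i else 0)
      ≤ ∑ i ∈ Finset.range n, if 0 < x i ∧ x i ≤ b then l i else 0 := by
    refine Finset.sum_le_sum fun i _ => ?_
    split_ifs with h h' h' <;>
      first | rfl | exact (hl i).le | (exact absurd ⟨h.1, h.2.trans hab⟩ h')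
  have h2 : (∑ i ∈ Finset.range n, if b < x i ∧ x i ≤ 0 then l i else 0)
      ≤ ∑ i ∈ Finset.range n, if a < x i ∧ x i ≤ 0 then l i else 0 := by
    refine Finset.sum_le_sum fun i _ => ?_
    split_ifs with h h' h' <;>
      first | rfl | exact (hl i).le | (exact absurd ⟨lt_of_le_of_lt hab h.1, h.2⟩ h')
  linarith

lemma bddBelow_Yn (hl : ∀ i, 0 < l i) {s : Set ℝ} {z : ℝ} (hs : s ⊆ Set.Iic z) :
    BddBelow (Yn x l n '' s) := by
  refine ⟨-(∑ i ∈ Finset.range n, l i) - z, ?_⟩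
  rintro - ⟨y, hy, rfl⟩
  have h : -(∑ i ∈ Finset.range n, l i) - z ≤ -(∑ i ∈ Finset.range n, l i) - y := by
    have := hs hy; simp only [Set.mem_Iic] at this; linarith
  linarith [Yn_lb x l n hl y]

lemma In_le_Yn (hl : ∀ i, 0 < l i) (z : ℝ) : In x l n z ≤ Yn x l n z :=
  csInf_le (bddBelow_Yn x l n hl subset_rfl) ⟨z, Set.mem_Iic.2 le_rfl, rfl⟩

lemma In_anti (hl : ∀ i, 0 < l i) : Antitone (In x l n) := by
  intro a b hab
  exact csInf_le_csInf (bddBelow_Yn x l n hl subset_rfl)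
    ⟨Yn x l n a, ⟨a, Set.mem_Iic.2 le_rfl, rfl⟩⟩
    (Set.image_mono (Set.Iic_subset_Iic.2 hab))

lemma In_lb (hl : ∀ i, 0 < l i) (z : ℝ) :
    -(∑ i ∈ Finset.range n, l i) - z ≤ In x l n z := by
  refine le_csInf ⟨Yn x l n z, ⟨z, Set.mem_Iic.2 le_rfl, rfl⟩⟩ ?_
  rintro - ⟨y, hy, rfl⟩
  have hyz : y ≤ z := Set.mem_Iic.1 hy
  linarith [Yn_lb x l n hl y]

lemma sInf_Yn_Iio (hl : ∀ i, 0 < l i) (p : ℝ) :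
    sInf (Yn x l n '' Set.Iio p) = In x l n p := by
  have hsub : Set.Iio p ⊆ Set.Iic p := Set.Iio_subset_Iic_self
  have hbdd := bddBelow_Yn x l n hl (z := p) subset_rfl
  have hbdd' := bddBelow_Yn x l n hl (z := p) hsub
  refine le_antisymm ?_ (csInf_le_csInf hbdd (Set.nonempty_Iio.image _) (Set.image_mono hsub))
  rw [In]
  refine le_csInf ⟨_, ⟨p, Set.mem_Iic.2 le_rfl, rfl⟩⟩ ?_
  rintro - ⟨y, hy, rfl⟩
  rcases lt_or_eq_of_le (Set.mem_Iic.1 hy) with h | rfl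
  · exact csInf_le hbdd' ⟨y, h, rfl⟩
  · refine le_of_forall_pos_le_add fun ε hε => ?_
    have h1 : Yn x l n (y - ε) + (y - ε) ≤ Yn x l n y + y :=
      Sn_mono x l n hl (by linarith)
    have h2 : sInf (Yn x l n '' Set.Iio y) ≤ Yn x l n (y - ε) :=
      csInf_le hbdd' ⟨y - ε, by simp [hε], rfl⟩
    linarith

lemma In_split (hl : ∀ i, 0 < l i) {p z : ℝ} (hpz : p ≤ z) :
    In x l n z = min (In x l n p) (sInf (Yn x l n '' Set.Icc p z)) := by
  have hdecomp : Set.Iic z = Set.Iio p ∪ Set.Icc p z := by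
    ext t; simp only [Set.mem_Iic, Set.mem_union, Set.mem_Iio, Set.mem_Icc]
    constructor
    · intro h; rcases lt_or_ge t p with h' | h'; exacts [Or.inl h', Or.inr ⟨h', h⟩]
    · rintro (h | h); exacts [le_trans h.le hpz, h.2]
  rw [In, hdecomp, Set.image_union,
    csInf_union (bddBelow_Yn x l n hl (z := p) Set.Iio_subset_Iic_self)
      (Set.nonempty_Iio.image _)
      (bddBelow_Yn x l n hl (z := z) (fun t ht => ht.2)) ((Set.nonempty_Icc.2 hpz).image _),
    sInf_Yn_Iio x l n hl p]
end basic

lemma sInf_image_add (s : Set ℝ) (hne : s.Nonempty) (hbdd : BddBelow s) (c : ℝ) :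
    sInf ((fun v => v + c) '' s) = sInf s + c := by
  have := (OrderIso.addRight c).map_csInf' hne hbdd
  simpa using this.symm

lemma Yn_succ (x l : ℕ → ℝ) (k : ℕ) (z : ℝ) :
    Yn x l (k+1) z = Yn x l k z + (if x k ≤ z then l k else 0) - (if x k ≤ 0 then l k else 0) := by
  unfold Yn
  rw [Finset.sum_range_succ, Finset.sum_range_succ]
  by_cases hxz : x k ≤ z <;> by_cases hx0 : x k ≤ 0
  · simp only [hxz, hx0, not_lt.2 hx0, not_lt.2 hxz, false_and, if_false, if_true]; ring
  · simp only [hxz, hx0, not_le.1 hx0, not_lt.2 hxz, true_and, and_false, if_true, if_false]; ring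
  · simp only [hxz, hx0, not_lt.2 hx0, if_false, false_and, and_true, if_neg hxz, not_le.1 hxz,
      if_true]
    ring
  · simp only [if_neg hxz, if_neg hx0, not_le.1 hxz, not_le.1 hx0, true_and, and_true,
      if_pos, if_neg (fun h : 0 < x k ∧ x k ≤ z => hxz h.2)]
    ring

lemma In_succ (x l : ℕ → ℝ) (k : ℕ) (hl : ∀ i, 0 < l i) (z : ℝ) :
    In x l (k+1) z =
      (if z < x k then In x l k z
        else min (In x l k (x k)) (In x l k z + l k)) - (if x k ≤ 0 then l k else 0) := by
  set p := x k with hp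
  set L := l k with hL
  set c := if x k ≤ 0 then l k else 0 with hc
  rcases lt_or_ge z p with hzp | hpz
  · rw [if_pos hzp]
    have himg : Yn x l (k+1) '' Set.Iic z = (fun v => v + (-c)) '' (Yn x l k '' Set.Iic z) := by
      rw [← Set.image_comp]
      refine Set.image_congr fun y hy => ?_
      have : ¬ p ≤ y := by simp only [Set.mem_Iic] at hy; linarith
      simp only [Function.comp, Yn_succ, if_neg this, ← hc]; rw [if_neg (show ¬ x k ≤ y from this)]; ring
    rw [In, himg, sInf_image_add _ ((Set.nonempty_Iic).image _)
      (bddBelow_Yn x l k hl subset_rfl)]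
    rw [← In]; ring
  · rw [if_neg (not_lt.2 hpz)]
    have hdecomp : Set.Iic z = Set.Iio p ∪ Set.Icc p z := by
      ext t; simp only [Set.mem_Iic, Set.mem_union, Set.mem_Iio, Set.mem_Icc]
      constructor
      · intro h; rcases lt_or_ge t p with h' | h'; exacts [Or.inl h', Or.inr ⟨h', h⟩]
      · rintro (h | h); exacts [le_trans h.le hpz, h.2]
    have himg1 : Yn x l (k+1) '' Set.Iio p = (fun v => v + (-c)) '' (Yn x l k '' Set.Iio p) := by
      rw [← Set.image_comp]
      refine Set.image_congr fun y hy => ?_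
      have : ¬ p ≤ y := not_le.2 hy
      simp only [Function.comp, Yn_succ, if_neg this, ← hc]; rw [if_neg (show ¬ x k ≤ y from this)]; ring
    have himg2 : Yn x l (k+1) '' Set.Icc p z
        = (fun v => v + (L - c)) '' (Yn x l k '' Set.Icc p z) := by
      rw [← Set.image_comp]
      refine Set.image_congr fun y hy => ?_
      have : p ≤ y := hy.1
      simp only [Function.comp, Yn_succ, if_pos this, ← hc, ← hL]; rw [if_pos (show x k ≤ y from this)]; simp only [hc, hL]; ring
    rw [In, hdecomp, Set.image_union,
      csInf_union (bddBelow_Yn x l (k+1) hl (z := p) Set.Iio_subset_Iic_self)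
        (Set.nonempty_Iio.image _)
        (bddBelow_Yn x l (k+1) hl (z := z) (fun t ht => ht.2))
        ((Set.nonempty_Icc.2 hpz).image _),
      himg1, himg2,
      sInf_image_add _ (Set.nonempty_Iio.image _) (bddBelow_Yn x l k hl Set.Iio_subset_Iic_self),
      sInf_image_add _ ((Set.nonempty_Icc.2 hpz).image _)
        (bddBelow_Yn x l k hl (z := z) (fun t ht => ht.2)),
      sInf_Yn_Iio x l k hl p]
    have hsplit := In_split x l k hl hpz
    set m := sInf (Yn x l k '' Set.Icc p z) with hm
    have hL0 : 0 ≤ L := (hl k).le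
    rw [hsplit]
    rcases le_total (In x l k p) m with h | h <;>
      simp only [min_def] <;> split_ifs <;> linarith

lemma measurableSet_cover (x l : ℕ → ℝ) : ∀ k, MeasurableSet (cover x l k)
  | 0 => MeasurableSet.empty
  | k + 1 => ((measurableSet_cover x l k).union measurableSet_Ico)

lemma vol_inter_Ico_eq_Ioc (E : Set ℝ) (p y : ℝ) :
    volume (E ∩ Set.Ico p y) = volume (E ∩ Set.Ioc p y) :=
  measure_congr (ae_eq_set_inter (Filter.EventuallyEq.refl _ _) Ico_ae_eq_Ioc)

lemma vol_split (E : Set ℝ) (hE : MeasurableSet E) {a b c : ℝ} (hab : a ≤ b) (hbc : b ≤ c) :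
    volume (E ∩ Set.Ioc a c) = volume (E ∩ Set.Ioc a b) + volume (E ∩ Set.Ioc b c) := by
  rw [← Set.Ioc_union_Ioc_eq_Ioc hab hbc, Set.inter_union_distrib_left]
  exact measure_union (Set.disjoint_of_subset (Set.inter_subset_right)
    (Set.inter_subset_right) (Set.Ioc_disjoint_Ioc_of_le le_rfl)) (hE.inter measurableSet_Ioc)

/-- The main induction. -/
lemma cover_main (x l : ℕ → ℝ) (hl : ∀ i, 0 < l i) : ∀ k : ℕ,
    (∀ z : ℝ, z ∈ cover x l k ↔ 0 < Yn x l k z - In x l k z) ∧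
    (∀ a b : ℝ, a ≤ b →
      volume ((cover x l k)ᶜ ∩ Set.Ioc a b) = ENNReal.ofReal (In x l k a - In x l k b)) := by
  intro k
  induction k with
  | zero =>
      have hY0 : ∀ b : ℝ, Yn x l 0 b = -b := by intro b; simp [Yn]
      have hI0 : ∀ z : ℝ, In x l 0 z = -z := by
        intro z
        refine le_antisymm (by simpa [hY0 z] using In_le_Yn x l 0 hl z) ?_
        refine le_csInf ⟨_, ⟨z, Set.mem_Iic.2 le_rfl, rfl⟩⟩ ?_
        rintro - ⟨y, hy, rfl⟩
        rw [hY0]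
        have : y ≤ z := Set.mem_Iic.1 hy
        linarith
      constructor
      · intro z; simp [cover, hY0, hI0]
      · intro a b hab
        simp only [cover, Set.compl_empty, Set.univ_inter, Real.volume_Ioc, hI0]
        congr 1; ring
  | succ k ih =>
      obtain ⟨Hi, Hii⟩ := ih
      set p := x k with hp
      set L := l k with hLdef
      have hL : 0 < L := hl k
      set C := cover x l k with hC
      set Y := Yn x l k with hY
      set I := In x l k with hI
      -- Lipschitz bounds for I
      have hanti : Antitone I := In_anti x l k hl
      have hlipb : ∀ a b : ℝ, a ≤ b → I a - I b ≤ b - a := by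
        intro a b hab
        have h1 : ENNReal.ofReal (I a - I b) ≤ ENNReal.ofReal (b - a) := by
          rw [← Hii a b hab, ← Real.volume_Ioc]
          exact measure_mono Set.inter_subset_right
        have h2 : 0 ≤ b - a := by linarith
        exact (ENNReal.ofReal_le_ofReal_iff h2).1 h1
      have hcont : Continuous I := by
        refine (LipschitzWith.of_dist_le_mul (K := 1) fun a b => ?_).continuous
        rw [Real.dist_eq, Real.dist_eq, NNReal.coe_one, one_mul, abs_le]
        rcases le_total a b with h | h
        · have h1 := hanti h
          have h2 := hlipb a b h
          constructor <;> linarith [neg_abs_le (a - b), le_abs_self (a - b)]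
        · have h1 := hanti h
          have h2 := hlipb b a h
          constructor <;> linarith [neg_abs_le (a - b), le_abs_self (a - b)]
      -- the set defining y*
      set T := {y : ℝ | p ≤ y ∧ volume (Cᶜ ∩ Set.Ico p y) = ENNReal.ofReal L} with hT
      have hTeq : T = {y : ℝ | p ≤ y ∧ I p - I y = L} := by
        ext y
        simp only [hT, Set.mem_setOf_eq, and_congr_right_iff]
        intro hpy
        rw [vol_inter_Ico_eq_Ioc, Hii p y hpy]
        have h1 : 0 ≤ I p - I y := by have := hanti hpy; linarith
        rw [ENNReal.ofReal_eq_ofReal_iff h1 hL.le]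
      have hsum0 : (0:ℝ) ≤ ∑ i ∈ Finset.range k, l i :=
        Finset.sum_nonneg fun i _ => (hl i).le
      have hTne : T.Nonempty := by
        rw [hTeq]
        set M := p + L + 2 * (∑ i ∈ Finset.range k, l i) + 1 with hM
        have hpM : p ≤ M := by rw [hM]; linarith
        have hgM : L ≤ I p - I M := by
          have h1 := In_lb x l k hl p
          have h2 : I M ≤ (∑ i ∈ Finset.range k, l i) - M :=
            (In_le_Yn x l k hl M).trans (Yn_ub x l k hl M)
          rw [hM] at h2 ⊢
          simp only [← hI] at h1 h2 ⊢
          linarith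
        have hIVT := intermediate_value_Icc hpM
          (Continuous.continuousOn (by continuity : Continuous fun y => I p - I y))
        have hmem : L ∈ Set.Icc (I p - I p) (I p - I M) := ⟨by simp [hL.le], hgM⟩
        obtain ⟨y, hy, hgy⟩ := hIVT hmem
        exact ⟨y, hy.1, hgy⟩
      have hTbdd : BddBelow T := ⟨p, fun y hy => hy.1⟩
      have hTclosed : IsClosed T := by
        rw [hTeq]
        have : {y : ℝ | p ≤ y ∧ I p - I y = L}
            = Set.Ici p ∩ (fun y => I p - I y) ⁻¹' {L} := by
          ext y; simp [Set.mem_Ici]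
        rw [this]
        exact isClosed_Ici.inter (IsClosed.preimage (by continuity) isClosed_singleton)
      set ystar := sInf T with hystar
      have hyT : ystar ∈ T := hTclosed.csInf_mem hTne hTbdd
      have hyTeq := hTeq ▸ hyT
      have hpy : p ≤ ystar := hyTeq.1
      have hIy : I p - I ystar = L := hyTeq.2
      have hlt : ∀ z : ℝ, p ≤ z → z < ystar → I p - I z < L := by
        intro z hpz hzy
        by_contra hcon
        push_neg at hcon
        have hIVT := intermediate_value_Icc hpz
          (Continuous.continuousOn (by continuity : Continuous fun y => I p - I y))
        have hmem : L ∈ Set.Icc (I p - I p) (I p - I z) := ⟨by simp [hL.le], hcon⟩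
        obtain ⟨y, hy, hgy⟩ := hIVT hmem
        have : y ∈ T := by rw [hTeq]; exact ⟨hy.1, hgy⟩
        have := csInf_le hTbdd this
        rw [← hystar] at this
        linarith [hy.2]
      have hge : ∀ z : ℝ, ystar ≤ z → L ≤ I p - I z := by
        intro z hz
        have := hanti hz
        linarith
      have hcov : cover x l (k+1) = C ∪ Set.Ico p ystar := by
        rw [cover]
      have hcnonneg : ∀ z, 0 ≤ Y z - I z := fun z => by
        have := In_le_Yn x l k hl z; rw [← hY, ← hI] at this; linarith
      -- the function J
      set J : ℝ → ℝ := fun z => if z < p then I z else min (I p) (I z + L) with hJ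
      have hJle : ∀ z, z ≤ p → J z = I z := by
        intro z hz
        rcases lt_or_eq_of_le hz with h | rfl
        · simp [hJ, h]
        · simp only [hJ, lt_irrefl, if_false]
          exact min_eq_left (by linarith)
      have hJmid : ∀ z, p ≤ z → z ≤ ystar → J z = I p := by
        intro z h1 h2
        simp only [hJ, not_lt.2 h1, if_false]
        refine min_eq_left ?_
        have := hanti h2
        linarith
      have hJge : ∀ z, ystar ≤ z → J z = I z + L := by
        intro z hz
        have h1 : p ≤ z := hpy.trans hz
        simp only [hJ, not_lt.2 h1, if_false]
        exact min_eq_right (by linarith [hge z hz])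
      have hIn1 : ∀ z : ℝ, In x l (k+1) z = J z - (if p ≤ 0 then L else 0) := by
        intro z
        rw [In_succ x l k hl z, hJ]
      have hYn1 : ∀ z : ℝ, Yn x l (k+1) z
          = Y z + (if p ≤ z then L else 0) - (if p ≤ 0 then L else 0) := by
        intro z; rw [Yn_succ]
      constructor
      · -- part (i)
        intro z
        rw [hcov, hIn1, hYn1, Set.mem_union, Set.mem_Ico]
        rcases lt_or_ge z p with hzp | hpz
        · rw [if_neg (not_le.2 hzp), hJle z hzp.le]
          have : ¬ (p ≤ z ∧ z < ystar) := fun h => absurd h.1 (not_le.2 hzp)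
          rw [Hi z]
          simp only [this, or_false, ← hY, ← hI]
          constructor <;> intro h <;> linarith
        · rw [if_pos hpz]
          simp only [hJ, not_lt.2 hpz, if_false]
          have hmemIco : (p ≤ z ∧ z < ystar) ↔ 0 < I z + L - I p := by
            constructor
            · rintro ⟨h1, h2⟩; have := hlt z h1 h2; linarith
            · intro h
              refine ⟨hpz, ?_⟩
              by_contra hcon
              push_neg at hcon
              have := hge z hcon
              linarith
          rw [Hi z, hmemIco]
          have hA := hcnonneg z
          rcases le_total (I p) (I z + L) with hm | hm
          · rw [min_eq_left hm]
            constructor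
            · rintro (h | h) <;> linarith
            · intro h
              by_cases hA' : 0 < Y z - I z
              · exact Or.inl hA'
              · right; linarith
          · rw [min_eq_right hm]
            constructor
            · rintro (h | h) <;> linarith
            · intro h; exact Or.inl (by linarith)
      · -- part (ii)
        intro a b hab
        rw [hcov]
        set E := (C ∪ Set.Ico p ystar)ᶜ with hE
        have hEmeas : MeasurableSet E := by
          rw [hE, ← hcov]
          exact (measurableSet_cover x l (k+1)).compl
        set m1 := min (max a p) b with hm1
        set m2 := min (max a ystar) b with hm2
        have h1 : a ≤ m1 := le_min (le_max_left _ _) hab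
        have h12 : m1 ≤ m2 := min_le_min (max_le_max le_rfl hpy) le_rfl
        have h2b : m2 ≤ b := min_le_right _ _
        have hsplit : volume (E ∩ Set.Ioc a b)
            = volume (E ∩ Set.Ioc a m1) + volume (E ∩ Set.Ioc m1 m2)
              + volume (E ∩ Set.Ioc m2 b) := by
          rw [vol_split E hEmeas h1 (h12.trans h2b), vol_split E hEmeas h12 h2b, add_assoc]
        -- piece 1
        have hP1 : volume (E ∩ Set.Ioc a m1) = ENNReal.ofReal (J a - J m1)
            ∧ 0 ≤ J a - J m1 := by
          rcases le_total p a with hpa | hap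
          · have hm1a : m1 = a := by
              rw [hm1, max_eq_left hpa, min_eq_left hab]
            rw [hm1a]
            simp
          · have hm1p : m1 ≤ p := min_le_of_left_le (max_le hap le_rfl)
            have hsub1 : E ∩ Set.Ioc a m1 ⊆ Cᶜ ∩ Set.Ioc a m1 :=
              Set.inter_subset_inter (Set.compl_subset_compl.2 Set.subset_union_left) subset_rfl
            have hsub2 : Cᶜ ∩ Set.Ioc a m1 ⊆ (E ∩ Set.Ioc a m1) ∪ {p} := by
              rintro z ⟨hzC, hzI⟩
              rcases eq_or_lt_of_le (hzI.2.trans hm1p) with h | h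
              · exact Or.inr (by simp [h])
              · refine Or.inl ⟨?_, hzI⟩
                rw [hE, Set.mem_compl_iff, Set.mem_union]
                push_neg
                exact ⟨hzC, fun hmem => absurd hmem.1 (not_le.2 h)⟩
            have hvol : volume (E ∩ Set.Ioc a m1) = volume (Cᶜ ∩ Set.Ioc a m1) := by
              refine le_antisymm (measure_mono hsub1) ?_
              calc volume (Cᶜ ∩ Set.Ioc a m1) ≤ volume ((E ∩ Set.Ioc a m1) ∪ {p}) :=
                    measure_mono hsub2
                _ ≤ volume (E ∩ Set.Ioc a m1) + volume ({p} : Set ℝ) := measure_union_le _ _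
                _ = volume (E ∩ Set.Ioc a m1) := by simp
            rw [hvol, Hii a m1 h1, hJle a hap, hJle m1 hm1p]
            have := hanti h1
            exact ⟨rfl, by linarith⟩
        -- piece 2
        have hP2 : volume (E ∩ Set.Ioc m1 m2) = 0 ∧ J m1 = J m2 := by
          rcases le_or_gt m2 m1 with h | h
          · have : m1 = m2 := le_antisymm h12 h
            rw [this]
            simp
          · have hm1eq : m1 = max a p := by
              by_contra hcon
              have : m1 = b := by
                rcases min_cases (max a p) b with ⟨h', _⟩ | ⟨h', _⟩
                · exact absurd h' hcon
                · exact h'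
              rw [this] at h
              exact absurd (h.trans_le h2b) (lt_irrefl b)
            have hay : a ≤ ystar := by
              by_contra hcon
              push_neg at hcon
              have hm1a : m1 = max a p := hm1eq
              have : max a p = a := max_eq_left (hpy.trans hcon.le)
              have hm2a : m2 = min a b := by rw [hm2, max_eq_left hcon.le]
              rw [hm1a, this] at h
              rw [hm2a, min_eq_left hab] at h
              exact absurd h (lt_irrefl a)
            have hm2y : m2 ≤ ystar := by
              rw [hm2, max_eq_right hay]
              exact min_le_left _ _
            have hpm1 : p ≤ m1 := by rw [hm1eq]; exact le_max_right _ _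
            have hsub : E ∩ Set.Ioc m1 m2 ⊆ {ystar} := by
              rintro z ⟨hzE, hzI⟩
              rw [hE, Set.mem_compl_iff, Set.mem_union] at hzE
              push_neg at hzE
              have h1' : p ≤ z := hpm1.trans hzI.1.le
              have h2' : z ≤ ystar := hzI.2.trans hm2y
              have := hzE.2
              rw [Set.mem_Ico] at this
              push_neg at this
              have := this h1'
              simp only [Set.mem_singleton_iff]
              linarith
            constructor
            · exact le_antisymm ((measure_mono hsub).trans (by simp)) zero_le
            · rw [hJmid m1 hpm1 (h12.trans hm2y), hJmid m2 (hpm1.trans h12) hm2y]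
        -- piece 3
        have hP3 : volume (E ∩ Set.Ioc m2 b) = ENNReal.ofReal (J m2 - J b)
            ∧ 0 ≤ J m2 - J b := by
          rcases le_or_gt b m2 with h | h
          · have : m2 = b := le_antisymm h2b h
            rw [this]
            simp
          · have hm2eq : m2 = max a ystar := by
              by_contra hcon
              have : m2 = b := by
                rcases min_cases (max a ystar) b with ⟨h', _⟩ | ⟨h', _⟩
                · exact absurd h' hcon
                · exact h'
              rw [this] at h
              exact absurd h (lt_irrefl b)
            have hym2 : ystar ≤ m2 := by rw [hm2eq]; exact le_max_right _ _
            have hset : E ∩ Set.Ioc m2 b = Cᶜ ∩ Set.Ioc m2 b := by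
              ext z
              simp only [hE, Set.mem_inter_iff, Set.mem_compl_iff, Set.mem_union, not_or,
                Set.mem_Ico, not_and, not_lt]
              constructor
              · rintro ⟨⟨h1', _⟩, h2'⟩; exact ⟨h1', h2'⟩
              · rintro ⟨h1', h2'⟩
                exact ⟨⟨h1', fun _ => hym2.trans h2'.1.le⟩, h2'⟩
            rw [hset, Hii m2 b h2b, hJge m2 hym2, hJge b (hym2.trans h2b)]
            have := hanti h2b
            exact ⟨by congr 1; ring, by linarith⟩
        rw [hsplit, hP1.1, hP2.1, hP3.1, add_zero, ← ENNReal.ofReal_add hP1.2 hP3.2,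
          hIn1 a, hIn1 b]
        congr 1
        rw [hP2.2]
        ring

theorem cover_eq_pos_set
    (x l : ℕ → ℝ) (n : ℕ) (hn : 1 ≤ n) (hl : ∀ i, 0 < l i) :
    cover x l n = {z : ℝ | Yn x l n z - sInf (Yn x l n '' Set.Iic z) > 0} := by
  ext z
  rw [Set.mem_setOf_eq, gt_iff_lt]
  have := (cover_main x l hl n).1 z
  rw [this, In]
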